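/- Let K ⊆ ℝ^n be a nonempty closed convex set, d : ℝ^n → ℝ a differentiable m-strongly convex function (m > 0), and c > 0. Then for every η ∈ ℝ^n: (i) φ^c(λ, η) ≥ 0 for all λ ∈ K; and (ii) for λ ∈ K, φ^c(λ, η) = 0 if and only if λ ∈ SOL(K, η), i.e. ⟨ω − λ, η⟩ ≥ 0 for all ω ∈ K. -/

import Mathlib

open scoped RealInnerProductSpace

/-- Auchmuty's function `L^c(λ, η, ω) = c·d(λ) − c·d(ω) + ⟨η − c·∇d(λ), λ − ω⟩`. -/
noncomputable def Auchmuty {n : ℕ} (c : ℝ) (d : EuclideanSpace ℝ (Fin n) → ℝ)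
    (lam eta om : EuclideanSpace ℝ (Fin n)) : ℝ :=
  c * d lam - c * d om + ⟪eta - c • gradient d lam, lam - om⟫

/-- The generalized primal gap function `φ^c(λ, η) = sup_{ω ∈ K} L^c(λ, η, ω)`. -/
noncomputable def primalGap {n : ℕ} (K : Set (EuclideanSpace ℝ (Fin n))) (c : ℝ)
    (d : EuclideanSpace ℝ (Fin n) → ℝ) (lam eta : EuclideanSpace ℝ (Fin n)) : ℝ :=
  sSup (Auchmuty c d lam eta '' K)

/-- nonnegativity of the generalized primal gap function on `K`, and
`φ^c(λ, η) = 0` with `λ ∈ K` iff `λ ∈ SOL(K, η)`. -/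
theorem stmt1 {n : ℕ} (hn : 0 < n) (K : Set (EuclideanSpace ℝ (Fin n)))
    (hK : K.Nonempty) (hKclosed : IsClosed K) (hKconvex : Convex ℝ K)
    (d : EuclideanSpace ℝ (Fin n) → ℝ) (m : ℝ) (hm : 0 < m)
    (hddiff : Differentiable ℝ d)
    (hstrong : ∀ x y : EuclideanSpace ℝ (Fin n),
      d x + ⟪gradient d x, y - x⟫ + m / 2 * ‖y - x‖ ^ 2 ≤ d y)
    (c : ℝ) (hc : 0 < c) (eta : EuclideanSpace ℝ (Fin n)) :
    (∀ lam ∈ K, 0 ≤ primalGap K c d lam eta) ∧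
    (∀ lam ∈ K, (primalGap K c d lam eta = 0 ↔ ∀ om ∈ K, 0 ≤ ⟪om - lam, eta⟫)) := by
  -- Pointwise upper bound for Auchmuty's function
  have key : ∀ lam om : EuclideanSpace ℝ (Fin n),
      Auchmuty c d lam eta om ≤ -⟪om - lam, eta⟫ - c * (m / 2) * ‖om - lam‖ ^ 2 := by
    intro lam om
    have hs := hstrong lam om
    have hexp : ⟪eta - c • gradient d lam, lam - om⟫
        = -⟪om - lam, eta⟫ + c * ⟪gradient d lam, om - lam⟫ := by
      have h1 : (lam - om : EuclideanSpace ℝ (Fin n)) = -(om - lam) := by abel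
      rw [h1, inner_neg_right, inner_sub_left, real_inner_smul_left,
        real_inner_comm eta]
      ring
    unfold Auchmuty
    rw [hexp]
    nlinarith [hs, sq_nonneg ‖om - lam‖]
  -- self value is 0
  have hself : ∀ lam : EuclideanSpace ℝ (Fin n), Auchmuty c d lam eta lam = 0 := by
    intro lam; unfold Auchmuty; simp
  -- bounded above
  have hbdd : ∀ lam : EuclideanSpace ℝ (Fin n),
      BddAbove (Auchmuty c d lam eta '' K) := by
    intro lam
    refine ⟨‖eta‖ ^ 2 / (2 * (c * m)), ?_⟩
    rintro x ⟨om, hom, rfl⟩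
    have h1 := key lam om
    have h2 : -⟪om - lam, eta⟫ ≤ ‖om - lam‖ * ‖eta‖ := by
      have := abs_real_inner_le_norm (om - lam) eta
      have := neg_abs_le ⟪om - lam, eta⟫
      nlinarith [norm_nonneg (om - lam), norm_nonneg eta]
    have hcm : 0 < c * m := mul_pos hc hm
    have h3 : ‖om - lam‖ * ‖eta‖ - c * (m / 2) * ‖om - lam‖ ^ 2
        ≤ ‖eta‖ ^ 2 / (2 * (c * m)) := by
      rw [le_div_iff₀ (by positivity)]
      nlinarith [sq_nonneg (‖eta‖ - c * m * ‖om - lam‖)]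
    linarith
  -- part 1
  have part1 : ∀ lam ∈ K, 0 ≤ primalGap K c d lam eta := by
    intro lam hlam
    have : (0 : ℝ) ∈ Auchmuty c d lam eta '' K := ⟨lam, hlam, hself lam⟩
    exact le_csSup (hbdd lam) this
  refine ⟨part1, ?_⟩
  intro lam hlam
  constructor
  · -- forward direction
    intro hzero om hom
    -- Auchmuty ≤ 0 on K
    have hle : ∀ w ∈ K, Auchmuty c d lam eta w ≤ 0 := by
      intro w hw
      have := le_csSup (hbdd lam) (Set.mem_image_of_mem _ hw)
      rwa [show sSup (Auchmuty c d lam eta '' K) = 0 from hzero] at this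
    -- local max on K at lam
    have hmax : IsLocalMaxOn (Auchmuty c d lam eta) K lam := by
      have : ∀ᶠ w in nhdsWithin lam K, Auchmuty c d lam eta w ≤ Auchmuty c d lam eta lam := by
        filter_upwards [self_mem_nhdsWithin] with w hw
        rw [hself lam]; exact hle w hw
      exact this
    -- derivative of Auchmuty c d lam eta at lam is -(innerSL ℝ eta)
    set v : EuclideanSpace ℝ (Fin n) := eta - c • gradient d lam with hv
    have hd' : HasFDerivAt d
        ((InnerProductSpace.toDual ℝ (EuclideanSpace ℝ (Fin n))) (gradient d lam)) lam := by
      have := (hddiff lam).hasGradientAt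
      rwa [hasGradientAt_iff_hasFDerivAt] at this
    have hF : HasFDerivAt (Auchmuty c d lam eta)
        (-(c • ((InnerProductSpace.toDual ℝ (EuclideanSpace ℝ (Fin n))) (gradient d lam))
          + innerSL ℝ v)) lam := by
      have h1 : HasFDerivAt (fun w : EuclideanSpace ℝ (Fin n) => ⟪v, w⟫)
          (innerSL ℝ v) lam := (innerSL ℝ v).hasFDerivAt
      have h2 := ((hd'.const_smul c).add h1).neg.const_add (c * d lam + ⟪v, lam⟫)
      have heq : (fun w => c * d lam + ⟪v, lam⟫ + -(c • d w + ⟪v, w⟫))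
          = Auchmuty c d lam eta := by
        funext w
        unfold Auchmuty
        rw [inner_sub_right]
        simp only [smul_eq_mul]
        ring
      rw [← heq]; exact h2
    have hcone : om - lam ∈ posTangentConeAt K lam :=
      sub_mem_posTangentConeAt_of_segment_subset (hKconvex.segment_subset hlam hom)
    have := hmax.hasFDerivWithinAt_nonpos hF.hasFDerivWithinAt hcone
    simp only [ContinuousLinearMap.neg_apply, ContinuousLinearMap.add_apply,
      ContinuousLinearMap.coe_smul', Pi.smul_apply, InnerProductSpace.toDual_apply_apply,
      innerSL_apply_apply, smul_eq_mul, neg_le, neg_zero] at this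
    have hvexp : ⟪v, om - lam⟫ = ⟪eta, om - lam⟫ - c * ⟪gradient d lam, om - lam⟫ := by
      rw [hv, inner_sub_left, inner_smul_left]; simp
    rw [real_inner_comm]
    nlinarith [this, hvexp]
  · -- backward direction
    intro hsol
    refine le_antisymm ?_ (part1 lam hlam)
    apply Real.sSup_le
    · rintro x ⟨om, hom, rfl⟩
      have h1 := key lam om
      have h2 := hsol om hom
      have h4 : 0 ≤ c * (m / 2) * ‖om - lam‖ ^ 2 := by positivity
      linarith
    · exact le_refl 0
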